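/- The count N(d;2,2,0) of 2×2×2 non-negative integer arrays of total sum d and weight (2,2,0) satisfies: if d ≡ 0 (mod 4) then 384 · N(d;2,2,0) = d(d+4)(d²+12d+8); if d ≡ 2 (mod 4) then (as integers) 384 · N(d;2,2,0) = (d+2)(d³+14d²+28d−24); and if d is odd then N(d;2,2,0) = 0. -/

import Mathlib

open Finset

/-- `N d a b c` is the number of 2×2×2 arrays of non-negative integers with total
sum `d` whose slice sums in the three directions differ by `a`, `b`, `c`
respectively; it is the dimension of the weight space `W(d;a,b,c)`. -/
noncomputable def N (d a b c : ℕ) : ℕ :=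
  Set.ncard {e : Fin 2 × Fin 2 × Fin 2 → ℕ |
    (∑ i : Fin 2, ∑ j : Fin 2, ∑ k : Fin 2, e (i, j, k)) = d ∧
    (∑ j : Fin 2, ∑ k : Fin 2, e (0, j, k)) = (∑ j : Fin 2, ∑ k : Fin 2, e (1, j, k)) + a ∧
    (∑ i : Fin 2, ∑ k : Fin 2, e (i, 0, k)) = (∑ i : Fin 2, ∑ k : Fin 2, e (i, 1, k)) + b ∧
    (∑ i : Fin 2, ∑ j : Fin 2, e (i, j, 0)) = (∑ i : Fin 2, ∑ j : Fin 2, e (i, j, 1)) + c}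

def cc (m x y : ℕ) : ℕ := min (m - x) (m + 1 - y) + 1 - max x (y + 1)

def Fc (m : ℕ) : ℕ := ∑ x ∈ range (m + 2), ∑ y ∈ range (m + 2), cc m x y * cc m x y

def Qc (M : ℕ) : ℕ := ∑ x ∈ range M, (M + 1 - 2 * (x + 1)) * (M + 1 - 2 * (x + 1))

lemma Q_rec (M : ℕ) : Qc (M + 2) = Qc M + (M + 1) * (M + 1) := by
  unfold Qc
  rw [Finset.sum_range_succ' (fun x => (M + 2 + 1 - 2 * (x + 1)) * (M + 2 + 1 - 2 * (x + 1))) (M+1)]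
  rw [Finset.sum_range_succ]
  have h1 : ∀ x : ℕ, (M + 2 + 1 - 2 * (x + 1 + 1)) = (M + 1 - 2 * (x + 1)) := by intro x; omega
  simp only [h1]
  have h2 : M + 1 - 2 * (M + 1) = 0 := by omega
  have h3 : M + 2 + 1 - 2 * (0 + 1) = M + 1 := by omega
  rw [h2, h3]
  ring

lemma Q_odd (t : ℕ) : 3 * Qc (2 * t + 1) = 2 * t * (t + 1) * (2 * t + 1) := by
  induction t with
  | zero => decide
  | succ t ih =>
    have h : 2 * (t + 1) + 1 = (2 * t + 1) + 2 := by ring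
    rw [h, Q_rec, Nat.mul_add, ih]
    ring

lemma Q_even (t : ℕ) : 3 * Qc (2 * t + 2) = (t + 1) * (2 * t + 1) * (2 * t + 3) := by
  induction t with
  | zero => decide
  | succ t ih =>
    have h : 2 * (t + 1) + 2 = (2 * t + 2) + 2 := by ring
    rw [h, Q_rec, Nat.mul_add, ih]
    ring

lemma F_rec (m : ℕ) : Fc (m + 2) = Fc m + (m + 2) * (m + 2) + 2 * Qc (m + 2) := by
  have hshift : ∀ x y : ℕ, cc (m+2) (x+1) (y+1) = cc m x y := fun x y => by unfold cc; omega
  have hQ1 : ∀ x : ℕ, cc (m+2) (x+1) 0 = m + 3 - 2*(x+1) := fun x => by unfold cc; omega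
  have hQ2 : ∀ y : ℕ, cc (m+2) 0 (y+1) = m + 3 - 2*(y+1) := fun y => by unfold cc; omega
  have h00 : cc (m+2) 0 0 = m + 2 := by unfold cc; omega
  have hzr : ∀ y, cc m (m+2) y = 0 := fun y => by unfold cc; omega
  have hzc : ∀ x, cc m x (m+2) = 0 := fun x => by unfold cc; omega
  have hQext : ∑ x ∈ range (m+3), (m + 3 - 2*(x+1)) * (m + 3 - 2*(x+1)) = Qc (m+2) := by
    rw [show m+3 = (m+2)+1 from rfl, Finset.sum_range_succ,
      show m + 3 - 2*(m+2+1) = 0 by omega]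
    simp [Qc]
  have hinner : ∀ x : ℕ,
      (∑ y ∈ range (m+4), cc (m+2) (x+1) y * cc (m+2) (x+1) y)
      = (∑ y ∈ range (m+2), cc m x y * cc m x y) + (m + 3 - 2*(x+1)) * (m + 3 - 2*(x+1)) := by
    intro x
    rw [Finset.sum_range_succ' (fun y => cc (m+2) (x+1) y * cc (m+2) (x+1) y) (m+3)]
    simp only [hshift, hQ1]
    congr 1
    rw [show m+3 = (m+2)+1 from rfl, Finset.sum_range_succ, hzc]
    simp
  have hcol0 : (∑ y ∈ range (m+4), cc (m+2) 0 y * cc (m+2) 0 y)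
      = (m+2)*(m+2) + Qc (m+2) := by
    rw [Finset.sum_range_succ' (fun y => cc (m+2) 0 y * cc (m+2) 0 y) (m+3)]
    simp only [hQ2, h00]
    rw [hQext]; ring
  have main : Fc (m+2) = (∑ x ∈ range (m+3),
      ((∑ y ∈ range (m+2), cc m x y * cc m x y) + (m + 3 - 2*(x+1)) * (m + 3 - 2*(x+1))))
      + ((m+2)*(m+2) + Qc (m+2)) := by
    unfold Fc
    rw [show m+2+2 = m+4 from rfl,
      Finset.sum_range_succ' (fun x => ∑ y ∈ range (m+4), cc (m+2) x y * cc (m+2) x y) (m+3),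
      hcol0]
    congr 1
    exact Finset.sum_congr rfl fun x _ => hinner x
  rw [main, Finset.sum_add_distrib, hQext]
  have houter : (∑ x ∈ range (m+3), ∑ y ∈ range (m+2), cc m x y * cc m x y) = Fc m := by
    rw [show m+3 = (m+2)+1 from rfl, Finset.sum_range_succ]
    simp [hzr, Fc]
  rw [houter]; ring

lemma F_even (j : ℕ) : 3 * Fc (2 * j) = j * (j + 1) * (2 * j * j + 6 * j + 1) := by
  induction j with
  | zero => decide
  | succ j ih =>
    have h : 2 * (j + 1) = 2 * j + 2 := by ring
    rw [h, F_rec]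
    calc 3 * (Fc (2*j) + (2*j+2)*(2*j+2) + 2*Qc (2*j+2))
        = 3*Fc (2*j) + 3*((2*j+2)*(2*j+2)) + 2*(3*Qc (2*j+2)) := by ring
      _ = j * (j + 1) * (2 * j * j + 6 * j + 1) + 3*((2*j+2)*(2*j+2))
          + 2*((j + 1) * (2 * j + 1) * (2 * j + 3)) := by rw [ih, Q_even]
      _ = (j+1) * (j + 1 + 1) * (2 * (j+1) * (j+1) + 6 * (j+1) + 1) := by ring

lemma F_odd (j : ℕ) : 3 * Fc (2 * j + 1)
    = 2*j^4 + 12*j^3 + 22*j^2 + 15*j + 3 := by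
  induction j with
  | zero => decide
  | succ j ih =>
    have h : 2 * (j + 1) + 1 = (2 * j + 1) + 2 := by ring
    rw [h, F_rec]
    calc 3 * (Fc (2*j+1) + (2*j+1+2)*(2*j+1+2) + 2*Qc (2*j+1+2))
        = 3*Fc (2*j+1) + 3*((2*j+3)*(2*j+3)) + 2*(3*Qc (2*(j+1)+1)) := by ring_nf
      _ = (2*j^4 + 12*j^3 + 22*j^2 + 15*j + 3) + 3*((2*j+3)*(2*j+3))
          + 2*(2 * (j+1) * (j + 1 + 1) * (2 * (j+1) + 1)) := by rw [ih, Q_odd]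
      _ = 2*(j+1)^4 + 12*(j+1)^3 + 22*(j+1)^2 + 15*(j+1) + 3 := by ring

def Tq (m : ℕ) : Finset (ℕ × ℕ × ℕ × ℕ) :=
  (range (m+2) ×ˢ range (m+2) ×ˢ range (m+2) ×ˢ range (m+2)).filter
    (fun t => t.1 + t.2.1 + t.2.2.1 ≤ m + 1 ∧ t.1 + t.2.1 + t.2.2.2 ≤ m + 1 ∧
      t.1 + t.2.2.1 + t.2.2.2 ≤ m ∧ m + 2 ≤ 2*t.1 + t.2.1 + t.2.2.1 + t.2.2.2)

def ph (m : ℕ) (t : ℕ × ℕ × ℕ × ℕ) : Fin 2 × Fin 2 × Fin 2 → ℕ := fun x =>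
  if x.1 = 0 then
    (if x.2.1 = 0 then (if x.2.2 = 0 then t.1 else t.2.1)
     else (if x.2.2 = 0 then t.2.2.1 else m + 1 - (t.1 + t.2.1 + t.2.2.1)))
  else
    (if x.2.1 = 0 then (if x.2.2 = 0 then t.2.2.2 else m + 1 - (t.1 + t.2.1 + t.2.2.2))
     else (if x.2.2 = 0 then m - (t.1 + t.2.2.1 + t.2.2.2)
           else 2*t.1 + t.2.1 + t.2.2.1 + t.2.2.2 - (m+2)))

lemma N_eq_T (m : ℕ) : N (2*m) 2 2 0 = (Tq m).card := by
  have h10 : (1 : Fin 2) ≠ 0 := by decide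
  unfold N
  have hset : {e : Fin 2 × Fin 2 × Fin 2 → ℕ |
      (∑ i : Fin 2, ∑ j : Fin 2, ∑ k : Fin 2, e (i, j, k)) = 2*m ∧
      (∑ j : Fin 2, ∑ k : Fin 2, e (0, j, k)) = (∑ j : Fin 2, ∑ k : Fin 2, e (1, j, k)) + 2 ∧
      (∑ i : Fin 2, ∑ k : Fin 2, e (i, 0, k)) = (∑ i : Fin 2, ∑ k : Fin 2, e (i, 1, k)) + 2 ∧
      (∑ i : Fin 2, ∑ j : Fin 2, e (i, j, 0)) = (∑ i : Fin 2, ∑ j : Fin 2, e (i, j, 1)) + 0}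
      = ↑((Tq m).image (ph m)) := by
    ext e
    simp only [Set.mem_setOf_eq, Finset.coe_image, Set.mem_image, Finset.mem_coe,
      Fin.sum_univ_two]
    constructor
    · rintro ⟨hd, ha, hb, hc⟩
      refine ⟨(e (0,0,0), e (0,0,1), e (0,1,0), e (1,0,0)), ?_, ?_⟩
      · simp only [Tq, Finset.mem_filter, Finset.mem_product, Finset.mem_range]
        refine ⟨⟨?_, ?_, ?_, ?_⟩, ?_, ?_, ?_, ?_⟩ <;> omega
      · funext x
        obtain ⟨i, j, k⟩ := x
        fin_cases i <;> fin_cases j <;> fin_cases k <;>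
          (simp [ph, h10] at hd ha hb hc ⊢ <;> omega)
    · rintro ⟨t, ht, rfl⟩
      simp only [Tq, Finset.mem_filter, Finset.mem_product, Finset.mem_range] at ht
      simp [ph, h10]
      refine ⟨?_, ?_, ?_, ?_⟩ <;> omega
  rw [hset, Set.ncard_coe_finset]
  apply Finset.card_image_of_injOn
  intro a _ b _ h
  have h1 := congrFun h (0,0,0)
  have h2 := congrFun h (0,0,1)
  have h3 := congrFun h (0,1,0)
  have h4 := congrFun h (1,0,0)
  simp [ph, h10] at h1 h2 h3 h4
  obtain ⟨a1, a2, a3, a4⟩ := a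
  obtain ⟨b1, b2, b3, b4⟩ := b
  simp_all

def Ic (m : ℕ) (xy : ℕ × ℕ) : Finset ℕ :=
  Icc (max xy.1 (xy.2 + 1)) (min (m - xy.1) (m + 1 - xy.2))

def Gs (m : ℕ) : Finset ((_ : ℕ × ℕ) × (ℕ × ℕ)) :=
  (range (m+2) ×ˢ range (m+2)).sigma (fun xy => Ic m xy ×ˢ Ic m xy)

lemma G_card (m : ℕ) : (Gs m).card = Fc m := by
  unfold Gs Fc
  rw [Finset.card_sigma, Finset.sum_product]
  refine Finset.sum_congr rfl fun x _ => Finset.sum_congr rfl fun y _ => ?_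
  rw [Finset.card_product, Ic, Nat.card_Icc, cc]

lemma T_card (m : ℕ) : (Tq m).card = (Gs m).card := by
  apply Finset.card_nbij'
    (i := fun t => ⟨(min t.2.2.1 t.2.2.2,
        min (m+1-(t.1+t.2.2.1)) (m+1-(t.1+t.2.2.2)) - t.2.1),
        (t.1+t.2.2.1, t.1+t.2.2.2)⟩)
    (j := fun w => (min w.2.1 w.2.2 - w.1.1,
        min (m+1-w.2.1) (m+1-w.2.2) - w.1.2,
        w.2.1 - (min w.2.1 w.2.2 - w.1.1),
        w.2.2 - (min w.2.1 w.2.2 - w.1.1)))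
  · intro t ht
    simp only [Finset.mem_coe, Tq, Finset.mem_filter, Finset.mem_product, Finset.mem_range] at ht
    simp only [Finset.mem_coe, Gs, Finset.mem_sigma, Finset.mem_product, Finset.mem_range, Ic, Finset.mem_Icc]
    refine ⟨⟨?_, ?_⟩, ⟨?_, ?_⟩, ?_, ?_⟩ <;> omega
  · intro w hw
    simp only [Finset.mem_coe, Gs, Finset.mem_sigma, Finset.mem_product, Finset.mem_range, Ic,
      Finset.mem_Icc] at hw
    simp only [Finset.mem_coe, Tq, Finset.mem_filter, Finset.mem_product, Finset.mem_range]
    refine ⟨⟨?_, ?_, ?_, ?_⟩, ?_, ?_, ?_, ?_⟩ <;> omega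
  · intro t ht
    simp only [Tq, Finset.mem_filter, Finset.mem_product, Finset.mem_range, Finset.mem_coe] at ht
    obtain ⟨p, q, r, s⟩ := t
    dsimp only at ht ⊢
    simp only [Prod.mk.injEq]
    refine ⟨?_, ?_, ?_, ?_⟩ <;> omega
  · intro w hw
    simp only [Finset.mem_coe, Gs, Finset.mem_sigma, Finset.mem_product, Finset.mem_range, Ic,
      Finset.mem_Icc] at hw
    obtain ⟨⟨x, y⟩, u, v⟩ := w
    dsimp only at hw ⊢
    refine Sigma.ext ?_ (heq_of_eq ?_) <;> simp only [Prod.mk.injEq] <;>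
      refine ⟨?_, ?_⟩ <;> (try dsimp only) <;> omega

lemma N_eq_F (m : ℕ) : N (2 * m) 2 2 0 = Fc m := by
  rw [N_eq_T, T_card, G_card]

/-- Dimension formulas for the weight space `W(d;2,2,0)`. -/
theorem dim_weight_space_220 (d : ℕ) :
    (d % 4 = 0 → 384 * N d 2 2 0 = d * (d + 4) * (d ^ 2 + 12 * d + 8)) ∧
    (d % 4 = 2 → (384 * N d 2 2 0 : ℤ) =
      ((d : ℤ) + 2) * ((d : ℤ) ^ 3 + 14 * (d : ℤ) ^ 2 + 28 * (d : ℤ) - 24)) ∧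
    (Odd d → N d 2 2 0 = 0) := by
  refine ⟨?_, ?_, ?_⟩
  · intro h4
    obtain ⟨j, rfl⟩ : ∃ j, d = 4 * j := ⟨d / 4, by omega⟩
    have hN : N (4 * j) 2 2 0 = Fc (2 * j) := by
      rw [show 4 * j = 2 * (2 * j) by ring, N_eq_F]
    calc 384 * N (4 * j) 2 2 0 = 128 * (3 * Fc (2 * j)) := by rw [hN]; ring
      _ = 128 * (j * (j + 1) * (2 * j * j + 6 * j + 1)) := by rw [F_even]
      _ = 4 * j * (4 * j + 4) * ((4 * j) ^ 2 + 12 * (4 * j) + 8) := by ring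
  · intro h2
    obtain ⟨j, rfl⟩ : ∃ j, d = 4 * j + 2 := ⟨d / 4, by omega⟩
    have hN : N (4 * j + 2) 2 2 0 = Fc (2 * j + 1) := by
      rw [show 4 * j + 2 = 2 * (2 * j + 1) by ring, N_eq_F]
    have hF := F_odd j
    calc (384 * N (4 * j + 2) 2 2 0 : ℤ)
        = 128 * ((3 * Fc (2 * j + 1) : ℕ) : ℤ) := by rw [hN]; push_cast; ring
      _ = 128 * (2 * (j : ℤ) ^ 4 + 12 * (j : ℤ) ^ 3 + 22 * (j : ℤ) ^ 2 + 15 * (j : ℤ) + 3) := by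
          rw [hF]; push_cast; ring
      _ = (((4 * j + 2 : ℕ) : ℤ) + 2) * (((4 * j + 2 : ℕ) : ℤ) ^ 3
          + 14 * ((4 * j + 2 : ℕ) : ℤ) ^ 2 + 28 * ((4 * j + 2 : ℕ) : ℤ) - 24) := by
          push_cast; ring
  · intro hodd
    unfold N
    have hempty : {e : Fin 2 × Fin 2 × Fin 2 → ℕ |
        (∑ i : Fin 2, ∑ j : Fin 2, ∑ k : Fin 2, e (i, j, k)) = d ∧
        (∑ j : Fin 2, ∑ k : Fin 2, e (0, j, k)) = (∑ j : Fin 2, ∑ k : Fin 2, e (1, j, k)) + 2 ∧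
        (∑ i : Fin 2, ∑ k : Fin 2, e (i, 0, k)) = (∑ i : Fin 2, ∑ k : Fin 2, e (i, 1, k)) + 2 ∧
        (∑ i : Fin 2, ∑ j : Fin 2, e (i, j, 0)) = (∑ i : Fin 2, ∑ j : Fin 2, e (i, j, 1)) + 0}
        = ∅ := by
      ext e
      simp only [Set.mem_setOf_eq, Set.mem_empty_iff_false, iff_false, not_and]
      intro hd ha _ _
      simp only [Fin.sum_univ_two] at hd ha
      obtain ⟨k, hk⟩ := hodd
      omega
    rw [hempty, Set.ncard_empty]
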